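/- Uniqueness of the maximal sum-rate vector and optimality of Greedy Matching: if k ≤ n ≤ k + i − 2 (so i ≥ 2), then the vector λ* = (1,…,1,0,…,0) with i ones followed by k−i zeros is the unique vector λ ∈ S_i(n,k) satisfying Σ_{j=1}^k λ_j = i. Moreover, λ* admits exactly one valid allocation, namely the greedy one in which for each j ∈ [i] the full unit demand λ_j = 1 is routed to the singleton systematic recovery set {j} and all other recovery sets receive weight 0. -/

import Mathlib

open Matrix

/-- `R ⊆ [n]` is a recovery set for object `j` under generator matrix `G`:
the standard basis vector `e_j` lies in the span of the columns of `G` indexed by `R`,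
and minimally so. -/
def IsRecoverySet {F : Type*} [Field F] {k n : ℕ} (G : Matrix (Fin k) (Fin n) F)
    (j : Fin k) (R : Finset (Fin n)) : Prop :=
  (Pi.single j 1 : Fin k → F) ∈ Submodule.span F (Gᵀ '' (R : Set (Fin n))) ∧
    ∀ S : Finset (Fin n), S ⊂ R →
      (Pi.single j 1 : Fin k → F) ∉ Submodule.span F (Gᵀ '' (S : Set (Fin n)))

/-- A valid allocation of request rates `lam` to recovery sets: nonnegative weights
`w j R` supported on recovery sets, summing to `lam j` for each object `j`, and
loading each server `l` by at most its unit capacity. -/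
def IsValidAllocation {F : Type*} [Field F] {k n : ℕ} (G : Matrix (Fin k) (Fin n) F)
    (lam : Fin k → ℝ) (w : Fin k → Finset (Fin n) → ℝ) : Prop :=
  (∀ j R, 0 ≤ w j R) ∧
  (∀ j R, ¬ IsRecoverySet G j R → w j R = 0) ∧
  (∀ j, ∑ R : Finset (Fin n), w j R = lam j) ∧
  (∀ l : Fin n, ∑ j : Fin k, ∑ R ∈ Finset.univ.filter (fun R : Finset (Fin n) => l ∈ R),
      w j R ≤ 1)

/-- The service rate region of `G`. -/
def ServiceRegion {F : Type*} [Field F] {k n : ℕ} (G : Matrix (Fin k) (Fin n) F) :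
    Set (Fin k → ℝ) :=
  {lam | (∀ j, 0 ≤ lam j) ∧ ∃ w, IsValidAllocation G lam w}

/-- `Gmat M i` = the `k × n` matrix formed by the `i` leftmost (systematic) columns of `M`
followed by the `n - i` rightmost (parity) columns of `M`. -/
def Gmat {F : Type*} [Field F] {k n : ℕ} (M : Matrix (Fin k) (Fin (k + n)) F) (i : ℕ) :
    Matrix (Fin k) (Fin n) F :=
  Matrix.of fun r l =>
    if (l : ℕ) < i then M r ⟨(l : ℕ), by have := l.isLt; omega⟩
    else M r ⟨k + (l : ℕ), by have := l.isLt; omega⟩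

namespace GreedyAux

variable {F : Type*} [Field F] {k n : ℕ}

/-- Index map sending a column of `Gmat M i` to the corresponding column of `M`. -/
def phi (k i : ℕ) {n : ℕ} (l : Fin n) : Fin (k + n) :=
  if (l : ℕ) < i then ⟨(l : ℕ), by have := l.isLt; omega⟩
  else ⟨k + (l : ℕ), by have := l.isLt; omega⟩

lemma Gmat_apply (M : Matrix (Fin k) (Fin (k + n)) F) (i : ℕ) (r : Fin k) (l : Fin n) :
    Gmat M i r l = M r (phi k i l) := by
  unfold Gmat phi
  by_cases h : (l : ℕ) < i <;> simp [h]

lemma Gmat_col (M : Matrix (Fin k) (Fin (k + n)) F) (i : ℕ) (l : Fin n) :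
    (Gmat M i)ᵀ l = Mᵀ (phi k i l) := by
  funext r
  simp [Matrix.transpose_apply, Gmat_apply]

lemma phi_eq_castAdd_iff {i : ℕ} (j : Fin k) (l : Fin n) :
    phi k i l = Fin.castAdd n j ↔ (l : ℕ) = (j : ℕ) ∧ (l : ℕ) < i := by
  unfold phi
  have hj := j.isLt
  split_ifs with h
  · simp only [Fin.ext_iff, Fin.coe_castAdd]
    omega
  · simp only [Fin.ext_iff, Fin.coe_castAdd]
    omega

lemma e_col (M : Matrix (Fin k) (Fin (k + n)) F)
    (hsys : ∀ j : Fin k, ∀ r : Fin k, M r (Fin.castAdd n j) = if r = j then (1 : F) else 0)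
    (j : Fin k) : Mᵀ (Fin.castAdd n j) = Pi.single j 1 := by
  funext r
  rw [Matrix.transpose_apply, hsys j r, Pi.single_apply]

lemma G_col_systematic (M : Matrix (Fin k) (Fin (k + n)) F) (i : ℕ)
    (hsys : ∀ j : Fin k, ∀ r : Fin k, M r (Fin.castAdd n j) = if r = j then (1 : F) else 0)
    (j : Fin k) (hj : (j : ℕ) < i) (hjn : (j : ℕ) < n) :
    (Gmat M i)ᵀ (⟨(j : ℕ), hjn⟩ : Fin n) = Pi.single j 1 := by
  rw [Gmat_col]
  have h : phi k i (⟨(j : ℕ), hjn⟩ : Fin n) = Fin.castAdd n j := by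
    rw [phi_eq_castAdd_iff]
    exact ⟨rfl, hj⟩
  rw [h, e_col M hsys]

lemma systematic_recovery (M : Matrix (Fin k) (Fin (k + n)) F) (i : ℕ)
    (hsys : ∀ j : Fin k, ∀ r : Fin k, M r (Fin.castAdd n j) = if r = j then (1 : F) else 0)
    (hkn : k ≤ n) (j : Fin k) (hj : (j : ℕ) < i) :
    IsRecoverySet (Gmat M i) j {(⟨(j : ℕ), lt_of_lt_of_le j.isLt hkn⟩ : Fin n)} := by
  have hcol := G_col_systematic M i hsys j hj (lt_of_lt_of_le j.isLt hkn)
  constructor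
  · exact Submodule.subset_span ⟨⟨(j : ℕ), lt_of_lt_of_le j.isLt hkn⟩,
      Finset.mem_coe.2 (Finset.mem_singleton_self _), hcol⟩
  · intro S hS hmem
    rw [Finset.ssubset_singleton_iff] at hS
    subst hS
    simp only [Finset.coe_empty, Set.image_empty, Submodule.span_empty,
      Submodule.mem_bot] at hmem
    rw [show (Gmat M i)ᵀ '' (∅ : Set (Fin n)) = ∅ from Set.image_empty _,
      Submodule.span_empty, Submodule.mem_bot] at hmem
    have h1 : (1 : F) = 0 := by simpa using congrFun hmem j
    exact one_ne_zero h1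

lemma exists_sup {α : Type*} [Fintype α] [DecidableEq α] (s : Finset α) (m : ℕ)
    (h1 : s.card ≤ m) (h2 : m ≤ Fintype.card α) : ∃ t, s ⊆ t ∧ t.card = m := by
  obtain ⟨t, ht1, -, ht2⟩ := Finset.exists_subsuperset_card_eq (Finset.subset_univ s) h1
    (by simpa [Finset.card_univ] using h2)
  exact ⟨t, ht1, ht2⟩

lemma recovery_card (M : Matrix (Fin k) (Fin (k + n)) F) (i : ℕ)
    (hsys : ∀ j : Fin k, ∀ r : Fin k, M r (Fin.castAdd n j) = if r = j then (1 : F) else 0)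
    (hMDS : ∀ S : Finset (Fin (k + n)), S.card = k →
      LinearIndependent F (fun l : S => Mᵀ (l : Fin (k + n))))
    (hik : i ≤ k) (hkn : k ≤ n) (j : Fin k) (R : Finset (Fin n))
    (hR : IsRecoverySet (Gmat M i) j R) :
    ((j : ℕ) < i ∧ R = {(⟨(j : ℕ), lt_of_lt_of_le j.isLt hkn⟩ : Fin n)}) ∨ k ≤ R.card := by
  set jn : Fin n := ⟨(j : ℕ), lt_of_lt_of_le j.isLt hkn⟩ with hjn
  by_cases hmem : (j : ℕ) < i ∧ jn ∈ R
  · left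
    refine ⟨hmem.1, ?_⟩
    by_contra hne
    have hss : {jn} ⊂ R :=
      Finset.ssubset_iff_subset_ne.2 ⟨Finset.singleton_subset_iff.2 hmem.2,
        fun h => hne h.symm⟩
    refine hR.2 {jn} hss ?_
    rw [Finset.coe_singleton, show (Gmat M i)ᵀ '' {jn} = {(Gmat M i)ᵀ jn} from Set.image_singleton,
      G_col_systematic M i hsys j hmem.1 (lt_of_lt_of_le j.isLt hkn)]
    exact Submodule.mem_span_singleton_self _
  · right
    by_contra hcard
    push_neg at hcard
    have hc : Fin.castAdd n j ∉ R.image (phi k i) := by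
      simp only [Finset.mem_image, not_exists]
      rintro l ⟨hl, hphi⟩
      rw [phi_eq_castAdd_iff] at hphi
      refine hmem ⟨by omega, ?_⟩
      have : l = jn := Fin.ext (by rw [hphi.1])
      rwa [this] at hl
    have hT0 : (insert (Fin.castAdd n j) (R.image (phi k i))).card ≤ k := by
      have h1 := Finset.card_insert_le (Fin.castAdd n j) (R.image (phi k i))
      have h2 := Finset.card_image_le (s := R) (f := phi k i)
      omega
    set T0 : Finset (Fin (k + n)) := insert (Fin.castAdd n j) (R.image (phi k i)) with hT0def
    have hkcard : k ≤ Fintype.card (Fin (k + n)) := by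
      simp only [Fintype.card_fin]; omega
    obtain ⟨T, hT0T, hTcard⟩ := exists_sup T0 k hT0 hkcard
    have hLI : LinearIndependent F (fun l : T => Mᵀ (l : Fin (k + n))) := hMDS T hTcard
    have hxT : Fin.castAdd n j ∈ T := hT0T (Finset.mem_insert_self _ _)
    have hx : (⟨Fin.castAdd n j, hxT⟩ : {x // x ∈ T}) ∉
        (Subtype.val ⁻¹' (↑(R.image (phi k i)) : Set (Fin (k + n)))) := by
      simp only [Set.mem_preimage, Finset.mem_coe]
      exact hc
    have hns := hLI.notMem_span_image hx
    apply hns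
    have himg : ((fun x : {x // x ∈ T} => Mᵀ (x : Fin (k + n))) ''
        (Subtype.val ⁻¹' (↑(R.image (phi k i)) : Set (Fin (k + n))))) =
        (Gmat M i)ᵀ '' (↑R : Set (Fin n)) := by
      ext v
      simp only [Set.mem_image, Set.mem_preimage, Finset.mem_coe, Finset.mem_image]
      constructor
      · rintro ⟨⟨y, hy⟩, ⟨l, hl, rfl⟩, rfl⟩
        exact ⟨l, hl, (Gmat_col M i l)⟩
      · rintro ⟨l, hl, rfl⟩
        exact ⟨⟨phi k i l,
          hT0T (Finset.mem_insert_of_mem (Finset.mem_image_of_mem _ hl))⟩,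
          ⟨l, hl, rfl⟩, (Gmat_col M i l).symm⟩
    rw [himg]
    have hec : (Mᵀ ((⟨Fin.castAdd n j, hxT⟩ : {x // x ∈ T}) : Fin (k + n))) =
        Pi.single j 1 := e_col M hsys j
    rw [hec]
    exact hR.1

lemma card_filter_lt (N m : ℕ) (h : m ≤ N) :
    (Finset.univ.filter fun l : Fin N => (l : ℕ) < m).card = m := by
  have heq : (Finset.univ.filter fun l : Fin N => (l : ℕ) < m) =
      (Finset.range m).attachFin
        (fun x hx => lt_of_lt_of_le (Finset.mem_range.mp hx) h) := by
    ext l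
    simp [Finset.mem_attachFin]
  rw [heq, Finset.card_attachFin, Finset.card_range]

end GreedyAux

open GreedyAux Finset in
theorem greedy_unique_for_max_sum_rate
    {F : Type*} [Field F] [Fintype F] {k n : ℕ} (hk : 2 ≤ k) (hkn : k ≤ n)
    (hq : k + n + 1 ≤ Fintype.card F)
    (M : Matrix (Fin k) (Fin (k + n)) F)
    (hsys : ∀ j : Fin k, ∀ r : Fin k, M r (Fin.castAdd n j) = if r = j then (1 : F) else 0)
    (hMDS : ∀ S : Finset (Fin (k + n)), S.card = k →
      LinearIndependent F (fun l : S => Mᵀ (l : Fin (k + n))))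
    (i : ℕ) (hik : i ≤ k) (hn2 : n ≤ k + i - 2) :
    ((fun j : Fin k => if (j : ℕ) < i then (1 : ℝ) else 0) ∈
        ServiceRegion (Gmat M i : Matrix (Fin k) (Fin n) F)) ∧
      (∑ j : Fin k, (if (j : ℕ) < i then (1 : ℝ) else 0) = (i : ℝ)) ∧
      (∀ lam ∈ ServiceRegion (Gmat M i : Matrix (Fin k) (Fin n) F),
        ∑ j, lam j = (i : ℝ) →
          lam = fun j : Fin k => if (j : ℕ) < i then (1 : ℝ) else 0) ∧
      IsValidAllocation (Gmat M i) (fun j : Fin k => if (j : ℕ) < i then (1 : ℝ) else 0)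
        (fun (j : Fin k) (R : Finset (Fin n)) =>
          if (j : ℕ) < i ∧ R = {(⟨(j : ℕ), lt_of_lt_of_le j.isLt hkn⟩ : Fin n)} then 1
          else 0) ∧
      ∀ w : Fin k → Finset (Fin n) → ℝ,
        IsValidAllocation (Gmat M i) (fun j : Fin k => if (j : ℕ) < i then (1 : ℝ) else 0)
            w →
          w = fun (j : Fin k) (R : Finset (Fin n)) =>
            if (j : ℕ) < i ∧ R = {(⟨(j : ℕ), lt_of_lt_of_le j.isLt hkn⟩ : Fin n)} then 1
            else 0 := by
  have hi2 : 2 ≤ i := by omega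
  -- abbreviation for the systematic server of object j
  set jn : Fin k → Fin n := fun j => ⟨(j : ℕ), lt_of_lt_of_le j.isLt hkn⟩ with hjndef
  -- the sum of the target vector is i
  have hsum2 : ∑ j : Fin k, (if (j : ℕ) < i then (1 : ℝ) else 0) = (i : ℝ) := by
    rw [Finset.sum_boole]
    rw [card_filter_lt k i hik]
  -- the core uniqueness lemma
  have key : ∀ (lam : Fin k → ℝ) (w : Fin k → Finset (Fin n) → ℝ),
      IsValidAllocation (Gmat M i) lam w → ∑ j, lam j = (i : ℝ) →
      (∀ j, lam j = if (j : ℕ) < i then 1 else 0) ∧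
      (∀ (j : Fin k) (R : Finset (Fin n)),
        w j R = if (j : ℕ) < i ∧ R = {jn j} then 1 else 0) := by
    intro lam w hw hsum
    obtain ⟨hpos, hsupp, hsumR, hcap⟩ := hw
    set cR : Finset (Fin n) → ℕ := fun R => (R.filter fun l : Fin n => (l : ℕ) < i).card with hcRdef
    have hcR1 : ∀ (j : Fin k) (R : Finset (Fin n)), w j R ≠ 0 →
        1 ≤ cR R ∧ (¬((j : ℕ) < i ∧ R = {jn j}) → 2 ≤ cR R) := by
      intro j R hwne
      have hrec : IsRecoverySet (Gmat M i) j R := by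
        by_contra h; exact hwne (hsupp j R h)
      rcases recovery_card M i hsys hMDS hik hkn j R hrec with hg | hbig
      · constructor
        · simp only [hcRdef, hg.2, Finset.filter_singleton]
          rw [if_pos (show ((jn j : Fin n) : ℕ) < i from hg.1)]
          simp
        · intro hnn; exact absurd ⟨hg.1, hg.2⟩ hnn
      · have hsplit := Finset.card_filter_add_card_filter_not
          (s := R) (p := fun l : Fin n => (l : ℕ) < i)
        have hsub : (R.filter fun l : Fin n => ¬(l : ℕ) < i).card ≤
            (Finset.univ.filter fun l : Fin n => ¬(l : ℕ) < i).card :=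
          Finset.card_le_card (Finset.filter_subset_filter _ (Finset.subset_univ R))
        have hsplit2 := Finset.card_filter_add_card_filter_not
          (s := (Finset.univ : Finset (Fin n))) (p := fun l : Fin n => (l : ℕ) < i)
        rw [Finset.card_univ, Fintype.card_fin, card_filter_lt n i (le_trans hik hkn)]
          at hsplit2
        constructor
        · simp only [hcRdef]; omega
        · intro _; simp only [hcRdef]; omega
    -- load accounting on the systematic servers
    have hload : ∑ j, ∑ R : Finset (Fin n), (cR R : ℝ) * w j R ≤ (i : ℝ) := by
      have h1 : ∑ l ∈ Finset.univ.filter (fun l : Fin n => (l : ℕ) < i),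
          ∑ j, ∑ R ∈ Finset.univ.filter (fun R : Finset (Fin n) => l ∈ R), w j R
          ≤ (i : ℝ) := by
        calc ∑ l ∈ Finset.univ.filter (fun l : Fin n => (l : ℕ) < i),
            ∑ j, ∑ R ∈ Finset.univ.filter (fun R : Finset (Fin n) => l ∈ R), w j R
            ≤ ∑ _l ∈ Finset.univ.filter (fun l : Fin n => (l : ℕ) < i), (1 : ℝ) :=
              Finset.sum_le_sum (fun l _ => hcap l)
          _ = (i : ℝ) := by
              rw [Finset.sum_const, card_filter_lt n i (le_trans hik hkn)]
              simp
      have h2 : ∑ l ∈ Finset.univ.filter (fun l : Fin n => (l : ℕ) < i),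
          ∑ j, ∑ R ∈ Finset.univ.filter (fun R : Finset (Fin n) => l ∈ R), w j R
          = ∑ j, ∑ R : Finset (Fin n), (cR R : ℝ) * w j R := by
        rw [Finset.sum_comm]
        apply Finset.sum_congr rfl
        intro j _
        have hrw : ∀ l : Fin n,
          ∑ R ∈ Finset.univ.filter (fun R : Finset (Fin n) => l ∈ R), w j R
          = ∑ R : Finset (Fin n), if l ∈ R then w j R else 0 :=
          fun l => (Finset.sum_filter _ _)
        simp_rw [hrw]
        rw [Finset.sum_comm]
        apply Finset.sum_congr rfl
        intro R _
        rw [← Finset.sum_filter, Finset.sum_const]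
        have hLR : ((Finset.univ.filter fun l : Fin n => (l : ℕ) < i).filter
            fun l => l ∈ R) = R.filter (fun l : Fin n => (l : ℕ) < i) := by
          ext l
          simp only [Finset.mem_filter, Finset.mem_univ, true_and]
          exact ⟨fun h => ⟨h.2, h.1⟩, fun h => ⟨h.2, h.1⟩⟩
        rw [hLR, nsmul_eq_mul]
      exact le_trans (le_of_eq h2.symm) h1
    have htot : ∑ j, ∑ R : Finset (Fin n), w j R = (i : ℝ) := by
      simp_rw [hsumR]; exact hsum
    -- every non-greedy weight vanishes
    have hzero : ∀ (j : Fin k) (R : Finset (Fin n)),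
        ¬((j : ℕ) < i ∧ R = {jn j}) → w j R = 0 := by
      have hterm : ∀ j ∈ (Finset.univ : Finset (Fin k)),
          ∀ R ∈ (Finset.univ : Finset (Finset (Fin n))),
          0 ≤ ((cR R : ℝ) - 1) * w j R := by
        intro j _ R _
        by_cases hwz : w j R = 0
        · simp [hwz]
        · have h1 := (hcR1 j R hwz).1
          have h1' : (1 : ℝ) ≤ (cR R : ℝ) := by exact_mod_cast h1
          exact mul_nonneg (by linarith) (hpos j R)
      have hSle : ∑ j, ∑ R : Finset (Fin n), ((cR R : ℝ) - 1) * w j R ≤ 0 := by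
        have hexp : ∑ j, ∑ R : Finset (Fin n), ((cR R : ℝ) - 1) * w j R =
            (∑ j, ∑ R : Finset (Fin n), (cR R : ℝ) * w j R)
            - ∑ j, ∑ R : Finset (Fin n), w j R := by
          rw [← Finset.sum_sub_distrib]
          apply Finset.sum_congr rfl
          intro j _
          rw [← Finset.sum_sub_distrib]
          apply Finset.sum_congr rfl
          intro R _
          ring
        rw [hexp, htot]
        linarith
      have houter : ∑ j, ∑ R : Finset (Fin n), ((cR R : ℝ) - 1) * w j R = 0 :=
        le_antisymm hSle (Finset.sum_nonneg fun j hj =>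
          Finset.sum_nonneg (hterm j hj))
      have hall : ∀ (j : Fin k) (R : Finset (Fin n)), ((cR R : ℝ) - 1) * w j R = 0 := by
        intro j R
        have hinner := (Finset.sum_eq_zero_iff_of_nonneg
          (fun j hj => Finset.sum_nonneg (hterm j hj))).1 houter j (Finset.mem_univ j)
        exact (Finset.sum_eq_zero_iff_of_nonneg (hterm j (Finset.mem_univ j))).1
          hinner R (Finset.mem_univ R)
      intro j R hng
      by_contra hwz
      have h2 := (hcR1 j R hwz).2 hng
      have h2' : (2 : ℝ) ≤ (cR R : ℝ) := by exact_mod_cast h2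
      have hmul := hall j R
      rcases mul_eq_zero.1 hmul with h | h
      · linarith
      · exact hwz h
    -- values of lam
    have hlam : ∀ j, lam j = if (j : ℕ) < i then w j {jn j} else 0 := by
      intro j
      rw [← hsumR j]
      by_cases hj : (j : ℕ) < i
      · simp only [hj, if_true]
        exact Finset.sum_eq_single {jn j}
          (fun R _ hne => hzero j R (fun hc => hne hc.2))
          (fun h => absurd (Finset.mem_univ _) h)
      · simp only [hj, if_false]
        exact Finset.sum_eq_zero fun R _ => hzero j R (fun hc => hj hc.1)
    have hle1 : ∀ j, lam j ≤ 1 := by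
      intro j
      rw [hlam j]
      split_ifs with hj
      · refine le_trans ?_ (hcap (jn j))
        have h1 : w j {jn j} ≤
            ∑ R ∈ Finset.univ.filter (fun R : Finset (Fin n) => jn j ∈ R), w j R :=
          Finset.single_le_sum (fun R _ => hpos j R) (by simp)
        refine le_trans h1 ?_
        exact Finset.single_le_sum
          (f := fun j' => ∑ R ∈ Finset.univ.filter
            (fun R : Finset (Fin n) => jn j ∈ R), w j' R)
          (fun j' _ => Finset.sum_nonneg fun R _ => hpos j' R) (Finset.mem_univ j)
      · norm_num
    have hlamval : ∀ j, lam j = if (j : ℕ) < i then 1 else 0 := by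
      have hz : ∀ j : Fin k, ¬(j : ℕ) < i → lam j = 0 := fun j hj => by
        rw [hlam j, if_neg hj]
      have hfs : ∑ j ∈ Finset.univ.filter (fun j : Fin k => (j : ℕ) < i), lam j
          = (i : ℝ) := by
        rw [← Finset.sum_filter_add_sum_filter_not Finset.univ
          (fun j : Fin k => (j : ℕ) < i) lam] at hsum
        rw [Finset.sum_eq_zero (fun j hj => hz j (Finset.mem_filter.1 hj).2)] at hsum
        linarith
      have hcd : (Finset.univ.filter fun j : Fin k => (j : ℕ) < i).card = i :=
        card_filter_lt k i hik
      have heach : ∀ j ∈ Finset.univ.filter (fun j : Fin k => (j : ℕ) < i),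
          lam j = 1 := by
        have hsum0 : ∑ j ∈ Finset.univ.filter (fun j : Fin k => (j : ℕ) < i),
            ((1 : ℝ) - lam j) = 0 := by
          rw [Finset.sum_sub_distrib, Finset.sum_const, hcd, hfs]
          simp
        have h0 := (Finset.sum_eq_zero_iff_of_nonneg
          (fun j _ => by have := hle1 j; linarith)).1 hsum0
        intro j hj
        have := h0 j hj
        linarith
      intro j
      split_ifs with hj
      · exact heach j (by simp [hj])
      · exact hz j hj
    refine ⟨hlamval, ?_⟩
    intro j R
    by_cases hc : (j : ℕ) < i ∧ R = {jn j}
    · rw [if_pos hc, hc.2]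
      have h1 := hlam j
      rw [hlamval j, if_pos hc.1, if_pos hc.1] at h1
      linarith
    · rw [hzero j R hc, if_neg hc]
  -- validity of the greedy allocation
  have hvalid : IsValidAllocation (Gmat M i)
      (fun j : Fin k => if (j : ℕ) < i then (1 : ℝ) else 0)
      (fun (j : Fin k) (R : Finset (Fin n)) =>
        if (j : ℕ) < i ∧ R = {jn j} then 1 else 0) := by
    refine ⟨?_, ?_, ?_, ?_⟩
    · intro j R
      dsimp only
      split_ifs <;> norm_num
    · intro j R hnr
      dsimp only
      rw [if_neg]
      rintro ⟨hj, rfl⟩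
      exact hnr (systematic_recovery M i hsys hkn j hj)
    · intro j
      by_cases hj : (j : ℕ) < i
      · simp [hj]
      · simp [hj]
    · intro l
      by_cases hl : (l : ℕ) < i
      · have hlk : (l : ℕ) < k := lt_of_lt_of_le hl hik
        have hterm : ∀ j : Fin k,
            (∑ R ∈ Finset.univ.filter (fun R : Finset (Fin n) => l ∈ R),
              if (j : ℕ) < i ∧ R = {jn j} then (1 : ℝ) else 0)
            ≤ if j = (⟨(l : ℕ), hlk⟩ : Fin k) then 1 else 0 := by
          intro j
          rw [Finset.sum_filter]
          rw [Finset.sum_eq_single {jn j} (fun R _ hne => by simp [hne])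
            (fun h => absurd (Finset.mem_univ _) h)]
          by_cases hmem : l ∈ ({jn j} : Finset (Fin n))
          · have hjl : j = (⟨(l : ℕ), hlk⟩ : Fin k) := by
              have h := Finset.mem_singleton.1 hmem
              have hv : (l : ℕ) = (j : ℕ) := congrArg Fin.val h
              exact Fin.ext hv.symm
            rw [if_pos hmem, if_pos hjl]
            split_ifs <;> norm_num
          · rw [if_neg hmem]
            split_ifs <;> norm_num
        calc ∑ j : Fin k, ∑ R ∈ Finset.univ.filter (fun R : Finset (Fin n) => l ∈ R),
              (if (j : ℕ) < i ∧ R = {jn j} then (1 : ℝ) else 0)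
            ≤ ∑ j : Fin k, if j = (⟨(l : ℕ), hlk⟩ : Fin k) then (1 : ℝ) else 0 :=
              Finset.sum_le_sum (fun j _ => hterm j)
          _ = 1 := by simp
      · have hall : ∀ j : Fin k,
            (∑ R ∈ Finset.univ.filter (fun R : Finset (Fin n) => l ∈ R),
              if (j : ℕ) < i ∧ R = {jn j} then (1 : ℝ) else 0) = 0 := by
          intro j
          refine Finset.sum_eq_zero ?_
          intro R hR
          rw [Finset.mem_filter] at hR
          rw [if_neg]
          rintro ⟨hj, rfl⟩
          have := Finset.mem_singleton.1 hR.2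
          apply hl
          rw [this]
          exact hj
        rw [Finset.sum_eq_zero (fun j _ => hall j)]
        norm_num
  refine ⟨⟨fun j => by dsimp only; split_ifs <;> norm_num,
      ⟨_, hvalid⟩⟩, hsum2, ?_, hvalid, ?_⟩
  · intro lam hlm hs
    obtain ⟨-, w, hw⟩ := hlm
    funext j
    exact (key lam w hw hs).1 j
  · intro w hw
    funext j R
    exact (key _ w hw hsum2).2 j R
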